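/- For a locally path-connected metric space X, the following are equivalent: (1) the trivial subgroup of π₁(X) is open; (2) all subgroups of π₁(X,x) are open; (3) X is semi-locally simply connected. -/

import Mathlib

open FundamentalGroup

attribute [local instance] Path.Homotopic.setoid

/-- The set of loops at `x` representing elements of the subgroup `G` of `π₁(X, x)`. -/
def loopsIn {X : Type} [TopologicalSpace X] {x : X} (G : Subgroup (FundamentalGroup X x)) :
    Set (Path x x) :=
  {p : Path x x |
    FundamentalGroup.fromPath (X := TopCat.of X) (⟦p⟧ : Path.Homotopic.Quotient x x) ∈ G}

/-- `X` is semi-locally simply connected: every point has a neighborhood `U` such that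
every loop based at that point with image in `U` is nullhomotopic in `X`. -/
def SemiLocallySimplyConnected (X : Type) [TopologicalSpace X] : Prop :=
  ∀ z : X, ∃ U ∈ nhds z, ∀ p : Path z z, Set.range p ⊆ U → p.Homotopic (Path.refl z)

open Set unitInterval

noncomputable section SLSCAux
namespace SLSCAux

variable {Y : Type} [TopologicalSpace Y]

def interpI (s a b : I) : I :=
  ⟨(1 - s.1) * a.1 + s.1 * b.1, by
    constructor
    · nlinarith [s.2.1, s.2.2, a.2.1, b.2.1]
    · nlinarith [s.2.1, s.2.2, a.2.2, b.2.2]⟩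

@[simp] lemma interpI_zero (a b : I) : interpI 0 a b = a := by simp [interpI]
@[simp] lemma interpI_one (a b : I) : interpI 1 a b = b := by simp [interpI]
@[simp] lemma interpI_self (s a : I) : interpI s a a = a := by
  apply Subtype.ext; simp [interpI]; ring

lemma dist_interpI_left (s a b : I) : dist (interpI s a b) a ≤ dist b a := by
  rw [Subtype.dist_eq, Subtype.dist_eq, Real.dist_eq, Real.dist_eq]
  have h : ((interpI s a b : ℝ)) - a = s.1 * (b.1 - a.1) := by simp [interpI]; ring
  rw [h, abs_mul, abs_of_nonneg s.2.1]
  nlinarith [abs_nonneg ((b : ℝ) - (a : ℝ)), s.2.2]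

def lineI (a b : I) : Path a b where
  toFun t := interpI t a b
  continuous_toFun := by apply Continuous.subtype_mk; fun_prop
  source' := interpI_zero a b
  target' := interpI_one a b

@[simp] lemma lineI_apply (a b t : I) : lineI a b t = interpI t a b := rfl

/-- Two paths that both factor through a continuous map `φ : I → Y` by reparametrizations
with common endpoints are homotopic. -/
theorem homotopic_interp {u v : Y} (φ : C(I, Y)) (f g : I → I)
    (hf : Continuous f) (hg : Continuous g) (h0 : f 0 = g 0) (h1 : f 1 = g 1)
    (p q : Path u v) (hp : ∀ t, p t = φ (f t)) (hq : ∀ t, q t = φ (g t)) :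
    p.Homotopic q := by
  refine ⟨{ toFun := fun st => φ (interpI st.1 (f st.2) (g st.2))
            continuous_toFun := ?_
            map_zero_left := ?_
            map_one_left := ?_
            prop' := ?_ }⟩
  · apply φ.continuous.comp
    apply Continuous.subtype_mk
    have hf' : Continuous fun st : I × I => ((f st.2 : ℝ)) :=
      continuous_subtype_val.comp (hf.comp continuous_snd)
    have hg' : Continuous fun st : I × I => ((g st.2 : ℝ)) :=
      continuous_subtype_val.comp (hg.comp continuous_snd)
    have hs : Continuous fun st : I × I => ((st.1 : ℝ)) :=
      continuous_subtype_val.comp continuous_fst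
    fun_prop
  · intro t
    simp [interpI_zero, ← hp t]
  · intro t
    simp [interpI_one, ← hq t]
  · intro s t ht
    rcases ht with h | h
    · subst h
      show φ (interpI s (f 0) (g 0)) = _
      rw [h0, interpI_self, ← h0]
      exact (hp 0).symm
    · simp only [Set.mem_singleton_iff] at h
      subst h
      show φ (interpI s (f 1) (g 1)) = _
      rw [h1, interpI_self, ← h1]
      exact (hp 1).symm


/-- the subpath of `P` between parameters `a` and `b` -/
def subp {u v : Y} (P : Path u v) (a b : I) : Path (P a) (P b) where
  toFun t := P (interpI t a b)
  continuous_toFun := P.continuous.comp (show Continuous fun t => interpI t a b from (lineI a b).continuous)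
  source' := by simp
  target' := by simp

@[simp] lemma subp_apply {u v : Y} (P : Path u v) (a b t : I) :
    subp P a b t = P (interpI t a b) := rfl

theorem subp_trans {u v : Y} (P : Path u v) (a b c : I) :
    ((subp P a b).trans (subp P b c)).Homotopic (subp P a c) := by
  apply homotopic_interp P.toContinuousMap ⇑((lineI a b).trans (lineI b c)) ⇑(lineI a c)
    (Path.continuous _) (Path.continuous _)
  · simp
  · simp
  · intro t
    rw [Path.trans_apply, Path.trans_apply]
    split_ifs <;> rfl
  · intro t; rfl

lemma path_cast_rfl {u v : Y} (P : Path u v) : P.cast rfl rfl = P := rfl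

lemma homotopic_cast_iff {u v u' v' : Y} (hu : u' = u) (hv : v' = v) (P Q : Path u v) :
    (P.cast hu hv).Homotopic (Q.cast hu hv) ↔ P.Homotopic Q := by
  subst hu; subst hv; rfl

lemma cast_trans {u v w u' : Y} (hu : u' = u) (P : Path u v) (Q : Path v w) :
    (P.cast hu rfl).trans Q = (P.trans Q).cast hu rfl := by
  subst hu; rfl

open CategoryTheory in
/-- right-cancellation: if `U ⬝ V⁻¹` is nullhomotopic then `U` and `V` are homotopic. -/
lemma cancel_right_symm {a b : Y} (U V : Path a b)
    (h : (U.trans V.symm).Homotopic (Path.refl a)) : U.Homotopic V := by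
  let A : FundamentalGroupoid Y := ⟨a⟩
  let B : FundamentalGroupoid Y := ⟨b⟩
  have hq : ((⟦U⟧ : A ⟶ B) ≫ (⟦V.symm⟧ : B ⟶ A)) = 𝟙 A := Quotient.sound h
  have h2 : ((⟦V.symm⟧ : B ⟶ A) ≫ (⟦V⟧ : A ⟶ B)) = 𝟙 B :=
    Quotient.sound (⟨(Path.Homotopy.reflSymmTrans V).symm⟩ : (V.symm.trans V).Homotopic (Path.refl b))
  have key : (⟦U⟧ : A ⟶ B) = (⟦V⟧ : A ⟶ B) := by
    have ha : U.Homotopic (U.trans (Path.refl b)) := ⟨(Path.Homotopy.transRefl U).symm⟩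
    have hb : (U.trans (Path.refl b)).Homotopic (U.trans (V.symm.trans V)) :=
      Path.Homotopic.hcomp (Path.Homotopic.refl U) ⟨Path.Homotopy.reflSymmTrans V⟩
    have hc : (U.trans (V.symm.trans V)).Homotopic ((U.trans V.symm).trans V) :=
      ⟨(Path.Homotopy.transAssoc U V.symm V).symm⟩
    have hd : ((U.trans V.symm).trans V).Homotopic ((Path.refl a).trans V) :=
      Path.Homotopic.hcomp h (Path.Homotopic.refl V)
    have he : ((Path.refl a).trans V).Homotopic V := ⟨Path.Homotopy.reflTrans V⟩
    exact Quotient.sound (ha.trans (hb.trans (hc.trans (hd.trans he))))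
  exact Quotient.exact key

open CategoryTheory in
/-- conjugation: if `c ⬝ γ ⬝ c⁻¹` is nullhomotopic, so is `γ`. -/
lemma conj_null {a b : Y} (c : Path a b) (γ : Path b b)
    (h : ((c.trans γ).trans c.symm).Homotopic (Path.refl a)) :
    γ.Homotopic (Path.refl b) := by
  let A : FundamentalGroupoid Y := ⟨a⟩
  let B : FundamentalGroupoid Y := ⟨b⟩
  have hq : (((⟦c⟧ : A ⟶ B) ≫ (⟦γ⟧ : B ⟶ B)) ≫ (⟦c.symm⟧ : B ⟶ A)) = 𝟙 A := Quotient.sound h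
  have hic : ((⟦c.symm⟧ : B ⟶ A) ≫ (⟦c⟧ : A ⟶ B)) = 𝟙 B :=
    Quotient.sound (⟨(Path.Homotopy.reflSymmTrans c).symm⟩ : (c.symm.trans c).Homotopic (Path.refl b))
  have key : (⟦γ⟧ : B ⟶ B) = 𝟙 B := by
    have hcg : (c.trans γ).Homotopic c := cancel_right_symm (c.trans γ) c h
    have ha : γ.Homotopic ((Path.refl b).trans γ) := ⟨(Path.Homotopy.reflTrans γ).symm⟩
    have hb : ((Path.refl b).trans γ).Homotopic ((c.symm.trans c).trans γ) :=
      Path.Homotopic.hcomp ⟨Path.Homotopy.reflSymmTrans c⟩ (Path.Homotopic.refl γ)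
    have hc' : ((c.symm.trans c).trans γ).Homotopic (c.symm.trans (c.trans γ)) :=
      ⟨Path.Homotopy.transAssoc c.symm c γ⟩
    have hd : (c.symm.trans (c.trans γ)).Homotopic (c.symm.trans c) :=
      Path.Homotopic.hcomp (Path.Homotopic.refl c.symm) hcg
    have he : (c.symm.trans c).Homotopic (Path.refl b) := ⟨(Path.Homotopy.reflSymmTrans c).symm⟩
    exact Quotient.sound (ha.trans (hb.trans (hc'.trans (hd.trans he))))
  exact Quotient.exact key


/-- metric characterisation of open sets of paths -/
theorem isOpen_pathset_iff {Z : Type} [MetricSpace Z] {x y : Z} (S : Set (Path x y)) :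
    IsOpen S ↔ ∀ p ∈ S, ∃ ε > 0, ∀ q : Path x y, (∀ t, dist (q t) (p t) < ε) → q ∈ S := by
  have hind : Topology.IsInducing ((↑) : Path x y → C(I, Z)) := ⟨rfl⟩
  rw [hind.isOpen_iff]
  constructor
  · rintro ⟨T, hT, rfl⟩ p hp
    obtain ⟨ε, hε, hball⟩ := Metric.isOpen_iff.mp hT _ hp
    refine ⟨ε / 2, by positivity, fun q hq => ?_⟩
    have : dist (q : C(I, Z)) (p : C(I, Z)) ≤ ε / 2 :=
      ContinuousMap.dist_le (by positivity) |>.mpr fun t => (hq t).le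
    exact hball (lt_of_le_of_lt this (by linarith))
  · intro h
    choose ε hε hεS using h
    refine ⟨⋃ (p : Path x y) (hp : p ∈ S), Metric.ball (p : C(I, Z)) (ε p hp), ?_, ?_⟩
    · exact isOpen_iUnion fun p => isOpen_iUnion fun hp => Metric.isOpen_ball
    · ext q
      simp only [Set.mem_preimage, Set.mem_iUnion, Metric.mem_ball]
      constructor
      · rintro ⟨p, hp, hd⟩
        exact hεS p hp q fun t =>
          lt_of_le_of_lt (ContinuousMap.dist_apply_le_dist t) hd
      · intro hq
        exact ⟨q, hq, by simp [hε]⟩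

variable {W : Type} [MetricSpace W] [LocallyPathConnectedSpace W]

/-- From semi-local simple connectivity, every point has an open neighbourhood in which
every loop (at any base point of the neighbourhood) is nullhomotopic in the ambient space. -/
lemma adm_nhds (hX : ∀ z : W, ∃ U ∈ nhds z, ∀ p : Path z z, Set.range p ⊆ U → p.Homotopic (Path.refl z))
    (y : W) :
    ∃ V : Set W, IsOpen V ∧ y ∈ V ∧
      ∀ z ∈ V, ∀ L : Path z z, range L ⊆ V → L.Homotopic (Path.refl z) := by
  obtain ⟨U, hU, hloop⟩ := hX y
  have hyU : y ∈ interior U := mem_interior_iff_mem_nhds.2 hU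
  refine ⟨pathComponentIn (interior U) y, isOpen_interior.pathComponentIn y,
    mem_pathComponentIn_self hyU, ?_⟩
  intro z hz L hL
  have hpc : IsPathConnected (pathComponentIn (interior U) y) :=
    isPathConnected_pathComponentIn hyU
  have hJ : JoinedIn (pathComponentIn (interior U) y) y z :=
    hpc.joinedIn y (mem_pathComponentIn_self hyU) z hz
  set c := hJ.somePath with hc
  have hcmem := hJ.somePath_mem
  have hsub : pathComponentIn (interior U) y ⊆ U :=
    pathComponentIn_subset.trans interior_subset
  have key : ((c.trans L).trans c.symm).Homotopic (Path.refl y) := by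
    apply hloop
    rw [Path.trans_range, Path.symm_range, Path.trans_range]
    refine Set.union_subset (Set.union_subset ?_ (hL.trans hsub)) ?_
    · exact (range_subset_iff.mpr hcmem).trans hsub
    · exact (range_subset_iff.mpr hcmem).trans hsub
  exact conj_null c L key


@[simp] lemma interpI_zero_one (s : I) : interpI s 0 1 = s := by
  apply Subtype.ext; simp [interpI]

/-- Key lemma: in a semi-locally simply connected, locally path-connected metric space,
loops uniformly close to a given loop are homotopic to it. -/
theorem close_homotopic
    (hX : ∀ z : W, ∃ U ∈ nhds z, ∀ L : Path z z, Set.range L ⊆ U → L.Homotopic (Path.refl z))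
    {x : W} (p : Path x x) :
    ∃ ε > 0, ∀ q : Path x x, (∀ t, dist (q t) (p t) < ε) → q.Homotopic p := by
  classical
  -- admissible neighbourhoods
  choose V hVopen hVmem hVnull using adm_nhds (W := W) hX
  -- Lebesgue number δ for the cover of the (compact) image of p
  obtain ⟨δ, hδpos, hδ⟩ :=
    lebesgue_number_lemma_of_metric (isCompact_range p.continuous) (fun y => hVopen y)
      (fun z _ => Set.mem_iUnion.2 ⟨z, hVmem z⟩)
  set ε := δ / 2 with hεdef
  have hεpos : 0 < ε := by positivity
  -- uniform continuity modulus
  obtain ⟨η, hηpos, hη⟩ := Metric.uniformContinuous_iff.mp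
    (CompactSpace.uniformContinuous_of_continuous p.continuous) (ε / 4) (by positivity)
  obtain ⟨n, hn⟩ := exists_nat_one_div_lt hηpos
  set N := n + 1 with hNdef
  have hNpos : (0:ℝ) < (N:ℝ) := by positivity
  -- subdivision points
  set T : ℕ → I := fun i => ⟨(min i N : ℕ) / (N:ℝ), by positivity, by
    rw [div_le_one hNpos]
    exact_mod_cast min_le_right i N⟩ with hTdef
  have hT0 : T 0 = 0 := Subtype.ext (by simp [hTdef])
  have hTN : ∀ i, N ≤ i → T i = 1 := fun i hi => Subtype.ext (by
    simp only [hTdef, min_eq_right hi]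
    field_simp
    rfl)
  have hTdist : ∀ i : ℕ, dist (T (i+1)) (T i) < η := by
    intro i
    have h1 : min i N ≤ min (i+1) N := by omega
    have h2 : min (i+1) N ≤ min i N + 1 := by omega
    have h1' : ((min i N : ℕ) : ℝ) ≤ ((min (i+1) N : ℕ) : ℝ) := by exact_mod_cast h1
    have h2' : ((min (i+1) N : ℕ) : ℝ) ≤ ((min i N : ℕ) : ℝ) + 1 := by exact_mod_cast h2
    have hle : dist (T (i+1)) (T i) ≤ 1 / (N:ℝ) := by
      rw [Subtype.dist_eq, Real.dist_eq]
      show |((min (i+1) N : ℕ) : ℝ) / N - ((min i N : ℕ) : ℝ) / N| ≤ 1 / (N:ℝ)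
      rw [div_sub_div_same, abs_of_nonneg (by apply div_nonneg; linarith; positivity)]
      exact (div_le_div_iff_of_pos_right hNpos).mpr (by linarith)
    refine lt_of_le_of_lt hle ?_
    have : (1:ℝ) / (N:ℝ) = 1 / ((n:ℝ) + 1) := by rw [hNdef]; push_cast; ring_nf
    rw [this]; exact hn
  -- radii for connecting paths
  have hrad : ∀ i : ℕ, ∃ r > 0, Metric.ball (p (T i)) r ⊆
      pathComponentIn (Metric.ball (p (T i)) ε) (p (T i)) := by
    intro i
    have hopen : IsOpen (pathComponentIn (Metric.ball (p (T i)) ε) (p (T i))) :=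
      Metric.isOpen_ball.pathComponentIn _
    exact Metric.isOpen_iff.mp hopen _ (mem_pathComponentIn_self (Metric.mem_ball_self hεpos))
  choose r hrpos hr using hrad
  have hrangene : (Finset.range (N+1)).Nonempty := ⟨0, by simp⟩
  set ρ := (Finset.range (N+1)).inf' hrangene r with hρdef
  have hρpos : 0 < ρ := by
    rw [hρdef, Finset.lt_inf'_iff]
    exact fun i _ => hrpos i
  set ε₀ := min (ε/4) ρ with hε₀def
  refine ⟨ε₀, lt_min (by positivity) hρpos, fun q hq => ?_⟩
  have hq4 : ∀ t, dist (q t) (p t) < ε/4 := fun t => lt_of_lt_of_le (hq t) (min_le_left _ _)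
  have hqρ : ∀ t, dist (q t) (p t) < ρ := fun t => lt_of_lt_of_le (hq t) (min_le_right _ _)
  -- endpoints coincide
  have hpq0 : p 0 = q 0 := by rw [p.source, q.source]
  have hpx : ∀ {i : ℕ}, (i = 0 ∨ N ≤ i) → p (T i) = x := by
    rintro i (rfl | hi)
    · rw [hT0]; exact p.source
    · rw [hTN i hi]; exact p.target
  have hqx : ∀ {i : ℕ}, (i = 0 ∨ N ≤ i) → q (T i) = x := by
    rintro i (rfl | hi)
    · rw [hT0]; exact q.source
    · rw [hTN i hi]; exact q.target
  -- connecting paths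
  have hjoin : ∀ i : ℕ, JoinedIn (Metric.ball (p (T i)) ε) (p (T i)) (q (T i)) := by
    intro i
    by_cases hi : i ≤ N
    · have hρr : ρ ≤ r i := Finset.inf'_le r (Finset.mem_range.mpr (by omega))
      have : q (T i) ∈ pathComponentIn (Metric.ball (p (T i)) ε) (p (T i)) :=
        hr i (Metric.mem_ball.mpr (lt_of_lt_of_le (hqρ (T i)) hρr))
      exact this
    · push_neg at hi
      have h1 : p (T i) = x := hpx (Or.inr hi.le)
      have h2 : q (T i) = x := hqx (Or.inr hi.le)
      refine ⟨(Path.refl x).cast h1 h2, fun t => ?_⟩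
      show ((Path.refl x).cast h1 h2) t ∈ _
      rw [Path.cast_coe]
      show x ∈ Metric.ball (p (T i)) ε
      rw [h1]; exact Metric.mem_ball_self hεpos
  -- the connecting paths
  have hAex : ∀ i : ℕ, ∃ B : Path (p (T i)) (q (T i)),
      (∀ t, B t ∈ Metric.ball (p (T i)) ε) ∧ ((i = 0 ∨ N ≤ i) → ∀ t, B t = x) := by
    intro i
    by_cases h : i = 0 ∨ N ≤ i
    · refine ⟨(Path.refl x).cast (hpx h) (hqx h), fun t => ?_, fun _ t => ?_⟩
      · rw [Path.cast_coe]; show x ∈ _; rw [hpx h]; exact Metric.mem_ball_self hεpos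
      · rw [Path.cast_coe]; rfl
    · exact ⟨(hjoin i).somePath, (hjoin i).somePath_mem, fun hcon => absurd hcon h⟩
  choose A hAball hAconst using hAex
  -- the square homotopies
  have hsquare : ∀ k : ℕ, k < N →
      ((A k).trans (subp q (T k) (T (k+1)))).Homotopic
        ((subp p (T k) (T (k+1))).trans (A (k+1))) := by
    intro k hk
    obtain ⟨y, hy⟩ := hδ (p (T k)) (Set.mem_range_self _)
    apply cancel_right_symm
    apply hVnull y (p (T k)) (hy (Metric.mem_ball_self hδpos))
    rw [Path.trans_range, Path.symm_range, Path.trans_range, Path.trans_range]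
    have hppk : dist (p (T (k+1))) (p (T k)) < ε/4 := hη (hTdist k)
    have hsubq : ∀ t : I, (subp q (T k) (T (k+1))) t ∈ Metric.ball (p (T k)) δ := by
      intro t
      rw [subp_apply, Metric.mem_ball]
      set s := interpI t (T k) (T (k+1))
      have hs : dist s (T k) < η := lt_of_le_of_lt (dist_interpI_left t _ _) (hTdist k)
      have h1 : dist (p s) (p (T k)) < ε/4 := hη hs
      have h2 : dist (q s) (p s) < ε/4 := hq4 s
      calc dist (q s) (p (T k)) ≤ dist (q s) (p s) + dist (p s) (p (T k)) := dist_triangle _ _ _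
      _ < ε/4 + ε/4 := by linarith
      _ ≤ δ := by rw [hεdef]; linarith
    have hsubp : ∀ t : I, (subp p (T k) (T (k+1))) t ∈ Metric.ball (p (T k)) δ := by
      intro t
      rw [subp_apply, Metric.mem_ball]
      have hs : dist (interpI t (T k) (T (k+1))) (T k) < η :=
        lt_of_le_of_lt (dist_interpI_left t _ _) (hTdist k)
      have := hη hs
      rw [hεdef] at this
      linarith
    have hAk : ∀ t : I, (A k) t ∈ Metric.ball (p (T k)) δ := by
      intro t
      have := hAball k t
      rw [Metric.mem_ball] at this ⊢
      rw [hεdef] at this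
      linarith
    have hAk1 : ∀ t : I, (A (k+1)) t ∈ Metric.ball (p (T k)) δ := by
      intro t
      have h1 := hAball (k+1) t
      rw [Metric.mem_ball] at h1 ⊢
      calc dist ((A (k+1)) t) (p (T k))
          ≤ dist ((A (k+1)) t) (p (T (k+1))) + dist (p (T (k+1))) (p (T k)) := dist_triangle _ _ _
      _ < ε + ε/4 := by linarith
      _ ≤ δ := by rw [hεdef]; linarith
    refine Set.union_subset (Set.union_subset ?_ ?_) (Set.union_subset ?_ ?_) <;>
      rw [Set.range_subset_iff] <;> intro t
    · exact hy (hAk t)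
    · exact hy (hsubq t)
    · exact hy (hsubp t)
    · exact hy (hAk1 t)
  -- telescoping induction
  have hS : ∀ k : ℕ, k ≤ N →
      ((subp p 0 (T k)).trans (A k)).Homotopic ((subp q 0 (T k)).cast hpq0 rfl) := by
    intro k
    induction k with
    | zero =>
      intro _
      have hEq : (subp p 0 (T 0)).trans (A 0) = (subp q 0 (T 0)).cast hpq0 rfl := by
        ext t
        rw [Path.trans_apply]
        have hc : ((subp q 0 (T 0)).cast hpq0 rfl) t = q (interpI t 0 (T 0)) := by
          rw [Path.cast_coe]; rfl
        have e : ∀ s : I, interpI s 0 (T 0) = 0 := by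
          intro s; rw [hT0]; exact interpI_self s 0
        rw [hc, e t, q.source]
        split_ifs with h
        · show p (interpI _ 0 (T 0)) = x
          rw [e, p.source]
        · rw [hAconst 0 (Or.inl rfl)]
      rw [hEq]
    | succ k ih =>
      intro hk1
      have hk : k < N := hk1
      have hSk := ih hk.le
      have h1 : ((subp p 0 (T (k+1))).trans (A (k+1))).Homotopic
          (((subp p 0 (T k)).trans (subp p (T k) (T (k+1)))).trans (A (k+1))) :=
        Path.Homotopic.hcomp (subp_trans p 0 (T k) (T (k+1))).symm (Path.Homotopic.refl _)
      have h2 : (((subp p 0 (T k)).trans (subp p (T k) (T (k+1)))).trans (A (k+1))).Homotopic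
          ((subp p 0 (T k)).trans ((subp p (T k) (T (k+1))).trans (A (k+1)))) :=
        ⟨Path.Homotopy.transAssoc _ _ _⟩
      have h3 : ((subp p 0 (T k)).trans ((subp p (T k) (T (k+1))).trans (A (k+1)))).Homotopic
          ((subp p 0 (T k)).trans ((A k).trans (subp q (T k) (T (k+1))))) :=
        Path.Homotopic.hcomp (Path.Homotopic.refl _) (hsquare k hk).symm
      have h4 : ((subp p 0 (T k)).trans ((A k).trans (subp q (T k) (T (k+1))))).Homotopic
          (((subp p 0 (T k)).trans (A k)).trans (subp q (T k) (T (k+1)))) :=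
        Path.Homotopic.symm ⟨Path.Homotopy.transAssoc _ _ _⟩
      have h5 : (((subp p 0 (T k)).trans (A k)).trans (subp q (T k) (T (k+1)))).Homotopic
          (((subp q 0 (T k)).cast hpq0 rfl).trans (subp q (T k) (T (k+1)))) :=
        Path.Homotopic.hcomp hSk (Path.Homotopic.refl _)
      have h6 : ((subp q 0 (T k)).cast hpq0 rfl).trans (subp q (T k) (T (k+1))) =
          ((subp q 0 (T k)).trans (subp q (T k) (T (k+1)))).cast hpq0 rfl :=
        cast_trans hpq0 _ _
      have h7 : (((subp q 0 (T k)).trans (subp q (T k) (T (k+1)))).cast hpq0 rfl).Homotopic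
          ((subp q 0 (T (k+1))).cast hpq0 rfl) :=
        (homotopic_cast_iff hpq0 rfl _ _).mpr (subp_trans q 0 (T k) (T (k+1)))
      exact h1.trans (h2.trans (h3.trans (h4.trans (h5.trans (h6 ▸ h7)))))
  -- conclusion
  have hfin := hS N le_rfl
  have hp0 : p 0 = x := p.source
  have hqN : q (T N) = x := hqx (Or.inr le_rfl)
  have hE1 : (subp p 0 (T N)).trans (A N) = (p.trans (Path.refl x)).cast hp0 hqN := by
    ext t
    rw [Path.trans_apply, Path.cast_coe, Path.trans_apply]
    split_ifs with h
    · show p (interpI _ 0 (T N)) = p _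
      rw [hTN N le_rfl, interpI_zero_one]
    · rw [hAconst N (Or.inr le_rfl)]; rfl
  have hE2 : (subp q 0 (T N)).cast hpq0 rfl = q.cast hp0 hqN := by
    ext t
    rw [Path.cast_coe, Path.cast_coe]
    show q (interpI t 0 (T N)) = q t
    rw [hTN N le_rfl, interpI_zero_one]
  rw [hE1, hE2] at hfin
  have := (homotopic_cast_iff hp0 hqN _ _).mp hfin
  exact this.symm.trans ⟨Path.Homotopy.transRefl p⟩


end SLSCAux
end SLSCAux

noncomputable section Assembly

open SLSCAux

variable {X : Type} [MetricSpace X]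

private lemma fromPath_eq_one_iff {x : X} (P : Path x x) :
    fromPath (X := TopCat.of X) (⟦P⟧ : Path.Homotopic.Quotient x x) = 1 ↔
      P.Homotopic (Path.refl x) := by
  constructor
  · intro h
    exact Quotient.exact (h : (⟦P⟧ : Path.Homotopic.Quotient x x) = ⟦Path.refl x⟧)
  · intro h
    exact (Quotient.sound h : (⟦P⟧ : Path.Homotopic.Quotient x x) = ⟦Path.refl x⟧)

private lemma fromPath_congr {x : X} {P Q : Path x x} (h : P.Homotopic Q) :
    fromPath (X := TopCat.of X) (⟦P⟧ : Path.Homotopic.Quotient x x) =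
      fromPath (X := TopCat.of X) (⟦Q⟧ : Path.Homotopic.Quotient x x) :=
  congrArg _ (Quotient.sound h)

private lemma key_of_one
    (h1 : ∀ x : X, IsOpen (loopsIn (⊥ : Subgroup (FundamentalGroup X x))))
    (x : X) (p : Path x x) :
    ∃ ε > 0, ∀ q : Path x x, (∀ t, dist (q t) (p t) < ε) → q.Homotopic p := by
  have hr : p.trans p.symm ∈ loopsIn (⊥ : Subgroup (FundamentalGroup X x)) := by
    show fromPath (X := TopCat.of X) (⟦p.trans p.symm⟧ : Path.Homotopic.Quotient x x) ∈
      (⊥ : Subgroup (FundamentalGroup X x))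
    rw [Subgroup.mem_bot]
    exact (fromPath_eq_one_iff _).mpr ⟨(Path.Homotopy.reflTransSymm p).symm⟩
  obtain ⟨ε, hε, hball⟩ := (isOpen_pathset_iff _).mp (h1 x) _ hr
  refine ⟨ε, hε, fun q hq => ?_⟩
  have hmem : q.trans p.symm ∈ loopsIn (⊥ : Subgroup (FundamentalGroup X x)) := by
    apply hball
    intro t
    rw [Path.trans_apply, Path.trans_apply]
    split_ifs with h
    · exact hq _
    · simp only [dist_self]; exact hε
  have hmem' : fromPath (X := TopCat.of X)
      (⟦q.trans p.symm⟧ : Path.Homotopic.Quotient x x) ∈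
        (⊥ : Subgroup (FundamentalGroup X x)) := hmem
  have hnull : (q.trans p.symm).Homotopic (Path.refl x) :=
    (fromPath_eq_one_iff _).mp (Subgroup.mem_bot.mp hmem')
  exact cancel_right_symm q p hnull

private lemma key_to_all
    (key : ∀ (x : X) (p : Path x x),
      ∃ ε > 0, ∀ q : Path x x, (∀ t, dist (q t) (p t) < ε) → q.Homotopic p)
    (x : X) (G : Subgroup (FundamentalGroup X x)) : IsOpen (loopsIn G) := by
  rw [isOpen_pathset_iff]
  intro p hp
  obtain ⟨ε, hε, h⟩ := key x p
  refine ⟨ε, hε, fun q hq => ?_⟩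
  show fromPath (X := TopCat.of X) (⟦q⟧ : Path.Homotopic.Quotient x x) ∈ G
  rw [fromPath_congr (h q hq)]
  exact hp

private lemma two_to_three [LocallyPathConnectedSpace X]
    (h2 : ∀ (x : X) (G : Subgroup (FundamentalGroup X x)), IsOpen (loopsIn G)) :
    SemiLocallySimplyConnected X := by
  intro z
  have hrefl : Path.refl z ∈ loopsIn (⊥ : Subgroup (FundamentalGroup X z)) := by
    show fromPath (X := TopCat.of X) (⟦Path.refl z⟧ : Path.Homotopic.Quotient z z) ∈
      (⊥ : Subgroup (FundamentalGroup X z))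
    rw [Subgroup.mem_bot]
    exact (fromPath_eq_one_iff _).mpr (Path.Homotopic.refl _)
  obtain ⟨ε, hε, hball⟩ := (isOpen_pathset_iff _).mp (h2 z ⊥) _ hrefl
  refine ⟨Metric.ball z ε, Metric.ball_mem_nhds z hε, fun L hL => ?_⟩
  have hmem : L ∈ loopsIn (⊥ : Subgroup (FundamentalGroup X z)) := by
    apply hball
    intro t
    have h3 : L t ∈ Metric.ball z ε := hL (Set.mem_range_self t)
    simpa [Metric.mem_ball] using h3
  have hmem' : fromPath (X := TopCat.of X)
      (⟦L⟧ : Path.Homotopic.Quotient z z) ∈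
        (⊥ : Subgroup (FundamentalGroup X z)) := hmem
  exact (fromPath_eq_one_iff _).mp (Subgroup.mem_bot.mp hmem')

end Assembly

/-- For a locally path-connected metric space `X`, the following are equivalent:
(1) the trivial subgroup of `π₁(X)` is open; (2) all subgroups of `π₁(X, x)` are open;
(3) `X` is semi-locally simply connected. -/
theorem slsc_iff_trivial_open {X : Type} [MetricSpace X] [PathConnectedSpace X]
    [LocallyPathConnectedSpace X] :
    ((∀ x : X, IsOpen (loopsIn (⊥ : Subgroup (FundamentalGroup X x)))) ↔
      (∀ (x : X) (G : Subgroup (FundamentalGroup X x)), IsOpen (loopsIn G))) ∧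
    ((∀ (x : X) (G : Subgroup (FundamentalGroup X x)), IsOpen (loopsIn G)) ↔
      SemiLocallySimplyConnected X) := by
  constructor
  · constructor
    · intro h1
      exact key_to_all (key_of_one h1)
    · intro h2 x
      exact h2 x ⊥
  · constructor
    · exact two_to_three
    · intro h3
      exact key_to_all (fun x p => SLSCAux.close_homotopic h3 p)
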